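/- Let n ≥ 1 and let S be a real (2n)×(2n) symmetric matrix (Sᵀ = S) all of whose (real) eigenvalues λ satisfy 0 < |λ| < 2π. Let J denote the standard symplectic matrix. Then for every t with 0 < t ≤ 1, the matrix exp(t·(J·S)) does not have 1 as a complex eigenvalue; equivalently, det(exp(t·(J·S)) − Id) ≠ 0. -/

import Mathlib

set_option linter.unusedSectionVars false
set_option maxHeartbeats 4000000

open Matrix

section Aux

variable {ι : Type*} [Fintype ι] [DecidableEq ι]

/-- Sum of squared norms of the entries of a complex vector. -/
noncomputable def Qn (v : ι → ℂ) : ℝ := ∑ i, Complex.normSq (v i)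

lemma Qn_pos {v : ι → ℂ} (hv : v ≠ 0) : 0 < Qn v := by
  have h : ∃ i, v i ≠ 0 := by
    by_contra h; push_neg at h; exact hv (funext h)
  obtain ⟨i, hi⟩ := h
  exact Finset.sum_pos' (fun j _ => Complex.normSq_nonneg _)
    ⟨i, Finset.mem_univ i, Complex.normSq_pos.2 hi⟩

lemma star_dot_self (v : ι → ℂ) : star v ⬝ᵥ v = (Qn v : ℂ) := by
  simp [Qn, dotProduct, Complex.normSq_eq_conj_mul_self, Pi.star_apply]

lemma Qn_mulVec_unitary {U : Matrix ι ι ℂ} (hU : Uᴴ * U = 1) (v : ι → ℂ) :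
    Qn (U *ᵥ v) = Qn v := by
  have h : star (U *ᵥ v) ⬝ᵥ (U *ᵥ v) = star v ⬝ᵥ v := by
    rw [star_mulVec, dotProduct_mulVec, vecMul_vecMul, hU, vecMul_one]
  rw [star_dot_self, star_dot_self] at h
  exact_mod_cast h

lemma Qn_smul (c : ℂ) (v : ι → ℂ) : Qn (c • v) = Complex.normSq c * Qn v := by
  simp [Qn, Complex.normSq_mul, Finset.mul_sum]

lemma Qn_neg (v : ι → ℂ) : Qn (-v) = Qn v := by
  simp [Qn]

lemma exp_map_complex (M : Matrix ι ι ℝ) :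
    (NormedSpace.exp M).map (algebraMap ℝ ℂ) = NormedSpace.exp (M.map (algebraMap ℝ ℂ)) := by
  letI : SeminormedRing (Matrix ι ι ℝ) := Matrix.linftyOpSemiNormedRing
  letI : NormedRing (Matrix ι ι ℝ) := Matrix.linftyOpNormedRing
  letI : NormedAlgebra ℝ (Matrix ι ι ℝ) := Matrix.linftyOpNormedAlgebra
  letI : SeminormedRing (Matrix ι ι ℂ) := Matrix.linftyOpSemiNormedRing
  letI : NormedRing (Matrix ι ι ℂ) := Matrix.linftyOpNormedRing
  letI : NormedAlgebra ℝ (Matrix ι ι ℂ) := Matrix.linftyOpNormedAlgebra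
  have hc : Continuous ((algebraMap ℝ ℂ).mapMatrix :
      Matrix ι ι ℝ →+* Matrix ι ι ℂ) := by
    show Continuous fun A : Matrix ι ι ℝ => A.map (algebraMap ℝ ℂ)
    exact Continuous.matrix_map continuous_id (continuous_algebraMap ℝ ℂ)
  exact NormedSpace.map_exp_of_mem_ball (𝕂 := ℝ) ((algebraMap ℝ ℂ).mapMatrix) hc M
    (by rw [NormedSpace.expSeries_radius_eq_top ℝ (Matrix ι ι ℝ)]; simp)

lemma exp_mulVec_eigen (A : Matrix ι ι ℂ) {v : ι → ℂ} {μ : ℂ} (h : A *ᵥ v = μ • v) :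
    NormedSpace.exp A *ᵥ v = Complex.exp μ • v := by
  letI : SeminormedRing (Matrix ι ι ℂ) := Matrix.linftyOpSemiNormedRing
  letI : NormedRing (Matrix ι ι ℂ) := Matrix.linftyOpNormedRing
  letI : NormedAlgebra ℝ (Matrix ι ι ℂ) := Matrix.linftyOpNormedAlgebra
  have hpow : ∀ k : ℕ, A ^ k *ᵥ v = μ ^ k • v := by
    intro k; induction k with
    | zero => simp [Matrix.one_mulVec]
    | succ k ih =>
      rw [pow_succ', ← Matrix.mulVec_mulVec, ih, Matrix.mulVec_smul, h, smul_smul, ← pow_succ]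
  let L : Matrix ι ι ℂ →ₗ[ℝ] (ι → ℂ) :=
    { toFun := fun M => M *ᵥ v
      map_add' := fun M N => Matrix.add_mulVec M N v
      map_smul' := fun r M => Matrix.smul_mulVec r M v }
  let L' : Matrix ι ι ℂ →L[ℝ] (ι → ℂ) := LinearMap.toContinuousLinearMap L
  have hsum : Summable (fun k : ℕ => (k.factorial : ℝ)⁻¹ • A ^ k) :=
    NormedSpace.expSeries_summable' A
  have h1 : NormedSpace.exp A *ᵥ v = ∑' k : ℕ, (k.factorial : ℝ)⁻¹ • (A ^ k *ᵥ v) := by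
    have : NormedSpace.exp A *ᵥ v = L' (NormedSpace.exp A) := rfl
    rw [this, NormedSpace.exp_eq_tsum ℝ, L'.map_tsum hsum]
    exact tsum_congr fun k => by rw [L'.map_smul]; rfl
  have h2 : ∑' k : ℕ, (k.factorial : ℝ)⁻¹ • (A ^ k *ᵥ v)
      = ∑' k : ℕ, ((k.factorial : ℝ)⁻¹ • μ ^ k) • v := by
    refine tsum_congr fun k => ?_
    rw [hpow k, smul_assoc]
  have hsum2 : Summable (fun k : ℕ => (k.factorial : ℝ)⁻¹ • μ ^ k) :=
    NormedSpace.expSeries_summable' (𝕂 := ℝ) μ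
  have h3 : NormedSpace.exp μ = ∑' k : ℕ, (k.factorial : ℝ)⁻¹ • μ ^ k := by
    rw [NormedSpace.exp_eq_tsum ℝ]
  rw [h1, h2, Summable.tsum_smul_const hsum2, ← h3,
    ← Complex.exp_eq_exp_ℂ]

lemma conjTranspose_map_ofReal (R : Matrix ι ι ℝ) :
    (R.map (algebraMap ℝ ℂ))ᴴ = (Rᵀ).map (algebraMap ℝ ℂ) := by
  ext i j
  simp [Matrix.conjTranspose_apply, Matrix.map_apply, Matrix.transpose_apply,
    Complex.conj_ofReal]

lemma J_map_complex (n : ℕ) :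
    (Matrix.J (Fin n) ℝ).map (algebraMap ℝ ℂ) = Matrix.J (Fin n) ℂ := by
  ext i j
  cases i <;> cases j <;>
    simp [Matrix.J, Matrix.map_apply, Matrix.one_apply, apply_ite (algebraMap ℝ ℂ)] <;>
    split <;> simp

lemma hasEigenvalue_real_of_complex (S : Matrix ι ι ℝ) (μ : ℝ) {v : ι → ℂ} (hv : v ≠ 0)
    (h : S.map (algebraMap ℝ ℂ) *ᵥ v = (μ : ℂ) • v) :
    Module.End.HasEigenvalue (Matrix.toLin' S) μ := by
  have hre : S *ᵥ (fun i => (v i).re) = μ • fun i => (v i).re := by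
    funext i
    have h1 := congrArg Complex.re (congrFun h i)
    simp only [Matrix.mulVec, dotProduct, Matrix.map_apply, Pi.smul_apply,
      Complex.real_smul, Complex.coe_algebraMap, Complex.re_sum, Complex.re_ofReal_mul,
      smul_eq_mul] at h1 ⊢
    exact h1
  have him : S *ᵥ (fun i => (v i).im) = μ • fun i => (v i).im := by
    funext i
    have h1 := congrArg Complex.im (congrFun h i)
    simp only [Matrix.mulVec, dotProduct, Matrix.map_apply, Pi.smul_apply,
      Complex.real_smul, Complex.coe_algebraMap, Complex.im_sum, Complex.im_ofReal_mul,
      smul_eq_mul] at h1 ⊢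
    exact h1
  obtain ⟨i, hi⟩ : ∃ i, v i ≠ 0 := by
    by_contra hcon; push_neg at hcon; exact hv (funext hcon)
  by_cases h0 : (fun i => (v i).re) = (0 : ι → ℝ)
  · have him0 : (fun i => (v i).im) ≠ (0 : ι → ℝ) := by
      intro h1
      exact hi (Complex.ext (congrFun h0 i) (congrFun h1 i))
    exact Module.End.hasEigenvalue_of_hasEigenvector
      ⟨Module.End.mem_eigenspace_iff.2 (by rw [Matrix.toLin'_apply]; exact him), him0⟩
  · exact Module.End.hasEigenvalue_of_hasEigenvector
      ⟨Module.End.mem_eigenspace_iff.2 (by rw [Matrix.toLin'_apply]; exact hre), h0⟩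

end Aux

/-- Nondegeneracy in the Conley–Zehnder index computation: if `S` is a real symmetric
`(2n)×(2n)` matrix all of whose real eigenvalues `μ` satisfy `0 < |μ| < 2π`, then for all
`0 < t ≤ 1`, the matrix `exp(t·(J·S))` does not have `1` as an eigenvalue, i.e.
`det(exp(t·(J·S)) - Id) ≠ 0`. -/
theorem exp_JS_no_eigenvalue_one
    (n : ℕ) (hn : 1 ≤ n)
    (S : Matrix (Fin n ⊕ Fin n) (Fin n ⊕ Fin n) ℝ) (hS : Sᵀ = S)
    (hev : ∀ μ : ℝ, Module.End.HasEigenvalue (Matrix.toLin' S) μ →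
      0 < |μ| ∧ |μ| < 2 * Real.pi) :
    ∀ t : ℝ, 0 < t → t ≤ 1 →
      (NormedSpace.exp (t • (Matrix.J (Fin n) ℝ * S)) - 1).det ≠ 0 := by
  intro t ht ht1 hdet
  classical
  set Sc : Matrix (Fin n ⊕ Fin n) (Fin n ⊕ Fin n) ℂ := S.map (algebraMap ℝ ℂ) with hScdef
  set Jc : Matrix (Fin n ⊕ Fin n) (Fin n ⊕ Fin n) ℂ := Matrix.J (Fin n) ℂ with hJcdef
  set A : Matrix (Fin n ⊕ Fin n) (Fin n ⊕ Fin n) ℂ := (t : ℂ) • (Jc * Sc) with hAdef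
  have hmapA : (t • (Matrix.J (Fin n) ℝ * S)).map (algebraMap ℝ ℂ) = A := by
    have h1 : (Matrix.J (Fin n) ℝ * S).map (algebraMap ℝ ℂ) = Jc * Sc := by
      rw [Matrix.map_mul, J_map_complex n]
    rw [hAdef, ← h1]
    ext i j
    simp [Matrix.map_apply, Matrix.smul_apply, smul_eq_mul, Complex.coe_algebraMap,
      Complex.ofReal_mul]
  set E : Matrix (Fin n ⊕ Fin n) (Fin n ⊕ Fin n) ℂ := NormedSpace.exp A with hEdef
  have hdetC : (E - 1).det = 0 := by
    have h1 : ((NormedSpace.exp (t • (Matrix.J (Fin n) ℝ * S)) - 1).map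
        (algebraMap ℝ ℂ)).det = 0 := by
      rw [← RingHom.mapMatrix_apply, ← RingHom.map_det, hdet, map_zero]
    have h3 := exp_map_complex (t • (Matrix.J (Fin n) ℝ * S))
    rw [hmapA] at h3
    have h2 : (NormedSpace.exp (t • (Matrix.J (Fin n) ℝ * S)) - 1).map (algebraMap ℝ ℂ)
        = E - 1 := by
      ext i j
      have h4 : (algebraMap ℝ ℂ) (NormedSpace.exp (t • (Matrix.J (Fin n) ℝ * S)) i j)
          = E i j := by
        rw [hEdef, ← h3]; rfl
      have h5 : (algebraMap ℝ ℂ) ((1 : Matrix (Fin n ⊕ Fin n) (Fin n ⊕ Fin n) ℝ) i j)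
          = (1 : Matrix (Fin n ⊕ Fin n) (Fin n ⊕ Fin n) ℂ) i j := by
        by_cases hij : i = j <;> simp [Matrix.one_apply, hij]
      rw [Matrix.map_apply, Matrix.sub_apply, Matrix.sub_apply, map_sub, h4, h5]
    rwa [h2] at h1
  obtain ⟨v0, hv0ne, hv0⟩ := (Matrix.exists_mulVec_eq_zero_iff).2 hdetC
  set K : Submodule ℂ ((Fin n ⊕ Fin n) → ℂ) := LinearMap.ker (Matrix.toLin' (E - 1)) with hKdef
  have hv0K : v0 ∈ K := by
    rw [hKdef, LinearMap.mem_ker, Matrix.toLin'_apply]; exact hv0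
  haveI : Nontrivial K := nontrivial_of_ne ⟨v0, hv0K⟩ 0 (by
    intro hcon; exact hv0ne (by simpa using congrArg Subtype.val hcon))
  have hcomm : Commute A E := (Commute.refl A).exp_right
  have hEA : (E - 1) * A = A * (E - 1) := by
    rw [sub_mul, one_mul, mul_sub, mul_one, hcomm.eq]
  have hKinv : ∀ x ∈ K, Matrix.toLin' A x ∈ K := by
    intro x hx
    rw [hKdef, LinearMap.mem_ker, Matrix.toLin'_apply] at hx ⊢
    rw [Matrix.toLin'_apply]
    calc (E - 1) *ᵥ (A *ᵥ x) = ((E - 1) * A) *ᵥ x := Matrix.mulVec_mulVec x (E - 1) A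
      _ = (A * (E - 1)) *ᵥ x := by rw [hEA]
      _ = A *ᵥ ((E - 1) *ᵥ x) := (Matrix.mulVec_mulVec x A (E - 1)).symm
      _ = A *ᵥ 0 := by rw [hx]
      _ = 0 := Matrix.mulVec_zero A
  obtain ⟨μ, hμ⟩ := Module.End.exists_eigenvalue ((Matrix.toLin' A).restrict hKinv)
  obtain ⟨w, hw⟩ := hμ.exists_hasEigenvector
  set v : (Fin n ⊕ Fin n) → ℂ := (w : (Fin n ⊕ Fin n) → ℂ) with hvdef
  have hvne : v ≠ 0 := fun hcon => hw.2 (Submodule.coe_eq_zero.mp hcon)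
  have hAv : A *ᵥ v = μ • v := by
    have h2 := congrArg Subtype.val hw.apply_eq_smul
    rw [LinearMap.restrict_coe_apply] at h2
    rw [← Matrix.toLin'_apply A v]
    exact h2
  have hEv : E *ᵥ v = v := by
    have h1 : Matrix.toLin' (E - 1) v = 0 := LinearMap.mem_ker.mp w.2
    rw [Matrix.toLin'_apply, Matrix.sub_mulVec, Matrix.one_mulVec, sub_eq_zero] at h1
    exact h1
  have h4 : (Complex.exp μ - 1) • v = 0 := by
    rw [sub_smul, one_smul, ← exp_mulVec_eigen A hAv, ← hEdef, hEv, sub_self]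
  have hexpμ : Complex.exp μ = 1 := by
    rcases smul_eq_zero.mp h4 with h5 | h5
    · exact sub_eq_zero.mp h5
    · exact absurd h5 hvne
  obtain ⟨k, hk⟩ := Complex.exp_eq_one_iff.mp hexpμ
  set c : ℂ := (t : ℂ)⁻¹ * μ with hcdef
  have htne : (t : ℂ) ≠ 0 := Complex.ofReal_ne_zero.mpr (ne_of_gt ht)
  have hBv : (Jc * Sc) *ᵥ v = c • v := by
    have h1 : (t : ℂ) • ((Jc * Sc) *ᵥ v) = μ • v := by
      rw [← Matrix.smul_mulVec, ← hAdef]; exact hAv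
    have h2 : ((t : ℂ)⁻¹ * (t : ℂ)) • ((Jc * Sc) *ᵥ v) = (t : ℂ)⁻¹ • (μ • v) := by
      rw [mul_smul, h1]
    rwa [inv_mul_cancel₀ htne, one_smul, ← mul_smul, ← hcdef] at h2
  have hJc2 : Jc * Jc = -1 := Matrix.J_squared (Fin n) ℂ
  have hJcH : Jcᴴ * Jc = 1 := by
    have h1 : Jcᴴ = -Jc := by
      rw [hJcdef, ← J_map_complex n, conjTranspose_map_ofReal, Matrix.J_transpose]
      ext i j
      simp [Matrix.map_apply]
    rw [h1, Matrix.neg_mul, hJc2, neg_neg]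
  have hScv : Sc *ᵥ v = -(c • (Jc *ᵥ v)) := by
    have h1 := congrArg (fun x => Jc *ᵥ x) hBv
    simp only [Matrix.mulVec_mulVec, Matrix.mulVec_smul] at h1
    rw [← mul_assoc, hJc2, neg_one_mul, Matrix.neg_mulVec] at h1
    rw [← neg_eq_iff_eq_neg.mpr h1.symm]
  have hScH : Sc.IsHermitian := by
    show Scᴴ = Sc
    rw [hScdef, conjTranspose_map_ofReal, hS]
  set d : (Fin n ⊕ Fin n) → ℝ := hScH.eigenvalues with hddef
  have hdev : ∀ i, 0 < |d i| ∧ |d i| < 2 * Real.pi := by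
    intro i
    apply hev
    have h1 := hScH.mulVec_eigenvectorBasis i
    have h2 : Sc *ᵥ ⇑(hScH.eigenvectorBasis i) = ((d i : ℝ) : ℂ) • ⇑(hScH.eigenvectorBasis i) := by
      rw [h1]; funext j; simp [Complex.real_smul, hddef]
    have hvne' : ⇑(hScH.eigenvectorBasis i) ≠ 0 := by
      intro hcon
      exact (hScH.eigenvectorBasis.orthonormal.ne_zero i) (by ext x; exact congrFun hcon x)
    exact hasEigenvalue_real_of_complex S (d i) hvne' h2
  have hne : (Finset.univ : Finset (Fin n ⊕ Fin n)).Nonempty := by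
    haveI : Nonempty (Fin n) := ⟨⟨0, hn⟩⟩
    exact Finset.univ_nonempty
  set a := Finset.univ.inf' hne (fun i => |d i|) with hadef
  set b := Finset.univ.sup' hne (fun i => |d i|) with hbdef
  have ha0 : 0 < a := (Finset.lt_inf'_iff hne).2 fun i _ => (hdev i).1
  have hb2π : b < 2 * Real.pi := (Finset.sup'_lt_iff hne).2 fun i _ => (hdev i).2
  have hab : a ≤ b := by
    have hi0 : (Sum.inl ⟨0, hn⟩ : Fin n ⊕ Fin n) ∈ (Finset.univ : Finset (Fin n ⊕ Fin n)) :=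
      Finset.mem_univ _
    have h1 : a ≤ |d (Sum.inl ⟨0, hn⟩ : Fin n ⊕ Fin n)| := by
      rw [hadef]; exact Finset.inf'_le (fun i => |d i|) hi0
    have h2 : |d (Sum.inl ⟨0, hn⟩ : Fin n ⊕ Fin n)| ≤ b := by
      rw [hbdef]; exact Finset.le_sup' (fun i => |d i|) hi0
    exact le_trans h1 h2
  have hb0 : 0 ≤ b := le_trans ha0.le hab
  set U : Matrix (Fin n ⊕ Fin n) (Fin n ⊕ Fin n) ℂ :=
    (hScH.eigenvectorUnitary : Matrix (Fin n ⊕ Fin n) (Fin n ⊕ Fin n) ℂ) with hUdef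
  have hU1 : Uᴴ * U = 1 := by
    rw [← Matrix.star_eq_conjTranspose]
    exact Matrix.mem_unitaryGroup_iff'.mp hScH.eigenvectorUnitary.2
  have hU2 : U * Uᴴ = 1 := by
    rw [← Matrix.star_eq_conjTranspose]
    exact Matrix.mem_unitaryGroup_iff.mp hScH.eigenvectorUnitary.2
  set w2 : (Fin n ⊕ Fin n) → ℂ := Uᴴ *ᵥ v with hw2def
  have hvw : Qn w2 = Qn v := by
    have h1 : (Uᴴ)ᴴ * Uᴴ = 1 := by rw [Matrix.conjTranspose_conjTranspose]; exact hU2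
    exact Qn_mulVec_unitary h1 v
  have hdecomp : Sc = U * Matrix.diagonal ((RCLike.ofReal ∘ d) : (Fin n ⊕ Fin n) → ℂ) * Uᴴ := by
    rw [hUdef, hddef, ← Matrix.star_eq_conjTranspose]
    exact hScH.spectral_theorem
  have hSpec : Sc *ᵥ v = U *ᵥ (Matrix.diagonal ((RCLike.ofReal ∘ d) :
      (Fin n ⊕ Fin n) → ℂ) *ᵥ w2) := by
    rw [hdecomp, hw2def, Matrix.mulVec_mulVec, Matrix.mulVec_mulVec]
  have hQd : Qn (Matrix.diagonal ((RCLike.ofReal ∘ d) : (Fin n ⊕ Fin n) → ℂ) *ᵥ w2)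
      = ∑ i, d i * d i * Complex.normSq (w2 i) := by
    unfold Qn
    refine Finset.sum_congr rfl fun i _ => ?_
    rw [Matrix.mulVec_diagonal, Complex.normSq_mul]
    have h1 : Complex.normSq ((RCLike.ofReal ∘ d) i) = d i * d i := by
      rw [show ((RCLike.ofReal ∘ d) i : ℂ) = ((d i : ℝ) : ℂ) from rfl, Complex.normSq_ofReal]
    rw [h1]
  have hQS : Qn (Sc *ᵥ v) = ∑ i, d i * d i * Complex.normSq (w2 i) := by
    rw [hSpec, Qn_mulVec_unitary hU1, hQd]
  have hlow : a * a * Qn v ≤ Qn (Sc *ᵥ v) := by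
    rw [hQS, ← hvw]
    unfold Qn
    rw [Finset.mul_sum]
    refine Finset.sum_le_sum fun i _ => ?_
    have h1 : a ≤ |d i| := by rw [hadef]; exact Finset.inf'_le (fun j => |d j|) (Finset.mem_univ i)
    have h2 := Complex.normSq_nonneg (w2 i)
    nlinarith [abs_nonneg (d i), abs_mul_abs_self (d i),
      mul_le_mul_of_nonneg_right (mul_le_mul h1 h1 ha0.le (abs_nonneg (d i))) h2]
  have hupp : Qn (Sc *ᵥ v) ≤ b * b * Qn v := by
    rw [hQS, ← hvw]
    unfold Qn
    rw [Finset.mul_sum]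
    refine Finset.sum_le_sum fun i _ => ?_
    have h1 : |d i| ≤ b := by rw [hbdef]; exact Finset.le_sup' (fun j => |d j|) (Finset.mem_univ i)
    have h2 := Complex.normSq_nonneg (w2 i)
    nlinarith [abs_nonneg (d i), abs_mul_abs_self (d i),
      mul_le_mul_of_nonneg_right (mul_le_mul h1 h1 (abs_nonneg (d i)) hb0) h2]
  have hQc : Qn (Sc *ᵥ v) = Complex.normSq c * Qn v := by
    rw [hScv, Qn_neg, Qn_smul, Qn_mulVec_unitary hJcH]
  have hQv : 0 < Qn v := Qn_pos hvne
  have h6 : a * a ≤ Complex.normSq c :=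
    le_of_mul_le_mul_right (by rw [← hQc]; exact hlow) hQv
  have h7 : Complex.normSq c ≤ b * b :=
    le_of_mul_le_mul_right (by rw [hQc] at hupp; exact hupp) hQv
  have hnct : Complex.normSq c * (t * t)
      = ((k : ℝ) * (k : ℝ)) * ((2 * Real.pi) * (2 * Real.pi)) := by
    have h8 : c * (t : ℂ) = μ := by
      rw [hcdef]; field_simp
    have h9 : Complex.normSq (c * (t : ℂ)) = Complex.normSq μ := by rw [h8]
    rw [Complex.normSq_mul, Complex.normSq_ofReal] at h9
    have hk' : μ = (((k : ℝ) * (2 * Real.pi) : ℝ) : ℂ) * Complex.I := by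
      rw [hk]; push_cast; ring
    rw [h9, hk', Complex.normSq_mul, Complex.normSq_I, Complex.normSq_ofReal]
    ring
  have hπ : 0 < Real.pi := Real.pi_pos
  rcases eq_or_ne k 0 with hk0 | hk0
  · have hpos : 0 < Complex.normSq c * (t * t) :=
      mul_pos (lt_of_lt_of_le (mul_pos ha0 ha0) h6) (mul_pos ht ht)
    rw [hk0] at hnct
    have h13 : Complex.normSq c * (t * t) = 0 := by rw [hnct]; norm_num
    exact absurd h13 (ne_of_gt hpos)
  · have hk1 : (1 : ℝ) ≤ (k : ℝ) * (k : ℝ) := by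
      have h10 : (1 : ℤ) ≤ k * k := by
        rcases lt_or_gt_of_ne hk0 with h | h <;> nlinarith
      exact_mod_cast h10
    have hnsc0 : 0 ≤ Complex.normSq c := Complex.normSq_nonneg c
    nlinarith [hnct, h7, hb2π, hb0, hk1, ht, ht1, hπ, hnsc0,
      mul_le_of_le_one_right hnsc0 (by nlinarith : t * t ≤ 1),
      mul_pos (sub_pos.mpr hb2π) (by positivity : (0:ℝ) < 2 * Real.pi + b)]
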